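/- Let G and H be ordered graphs on [n], let a_1, a_2, a_3, a_4 ∈ [n] with a_1 < a_2 < a_3 < a_4, and let b_1, b_2, b_3, b_4 ∈ [n] be pairwise distinct with a_4 ≤ b_i for each i ∈ [4]. If G − a_i = H − b_i for each i ∈ [4], then the interval [a_2,a_3] = {w : a_2 ≤ w ≤ a_3} is homogeneous in G, i.e. all its vertices are pairwise ∼-equivalent (so [a_2,a_3] is contained in a single homogeneous block of G). -/

import Mathlib

namespace OrderedGraphs

/-- The order-preserving map `Fin (n-1) → Fin n` that skips the vertex `v`. -/
def delMap {n : ℕ} (v : Fin n) (i : Fin (n - 1)) : Fin n :=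
  if h : (i : ℕ) < (v : ℕ) then ⟨i, lt_trans h v.isLt⟩
  else ⟨(i : ℕ) + 1, by have h1 := i.isLt; have h2 := v.isLt; omega⟩

/-- `erase G v` is the ordered graph `G − v` on `[n-1]`, obtained by deleting `v` and
relabelling the remaining vertices order-preservingly. -/
def erase {n : ℕ} (G : SimpleGraph (Fin n)) (v : Fin n) : SimpleGraph (Fin (n - 1)) where
  Adj i j := G.Adj (delMap v i) (delMap v j)
  symm := ⟨fun i j h => G.adj_symm h⟩
  loopless := ⟨fun i h => G.irrefl h⟩

/-- The shadow `∂G` of a single ordered graph. -/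
def shadow {n : ℕ} (G : SimpleGraph (Fin n)) : Set (SimpleGraph (Fin (n - 1))) :=
  {H | ∃ v : Fin n, H = erase G v}

/-- The shadow `∂𝒢` of a collection of ordered graphs. -/
def shadowCol {n : ℕ} (𝒢 : Set (SimpleGraph (Fin n))) : Set (SimpleGraph (Fin (n - 1))) :=
  ⋃ G ∈ 𝒢, shadow G

/-- `x ∼ y` : the relation `Γ(x) \ {y} = Γ(y) \ {x}`. -/
def simRel {n : ℕ} (G : SimpleGraph (Fin n)) (x y : Fin n) : Prop :=
  G.neighborSet x \ {y} = G.neighborSet y \ {x}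

/-- A set of consecutive vertices whose elements are pairwise `∼`-equivalent. -/
def IsHomInterval {n : ℕ} (G : SimpleGraph (Fin n)) (B : Set (Fin n)) : Prop :=
  B.OrdConnected ∧ ∀ x ∈ B, ∀ y ∈ B, simRel G x y

/-- A homogeneous block: a maximal nonempty set of consecutive vertices whose elements are
pairwise `∼`-equivalent. -/
def IsHomBlock {n : ℕ} (G : SimpleGraph (Fin n)) (B : Set (Fin n)) : Prop :=
  B.Nonempty ∧ IsHomInterval G B ∧ ∀ C, IsHomInterval G C → B ⊆ C → B = C

open Classical in
/-- The excess `m(G) = Σ_{B : |B| ≥ 3} (|B| − 2)`, the sum over homogeneous blocks;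
(truncated ℕ-subtraction makes blocks with `|B| ≤ 2` contribute `0`). -/
noncomputable def excess {n : ℕ} (G : SimpleGraph (Fin n)) : ℕ :=
  ∑ B ∈ Finset.univ.filter (fun B : Finset (Fin n) => IsHomBlock G ↑B), (B.card - 2)

/-- Two ordered graphs have the same type. -/
def SameType {n n' : ℕ} (G : SimpleGraph (Fin n)) (G' : SimpleGraph (Fin n')) : Prop :=
  ∃ (k : ℕ) (B : Fin k → Set (Fin n)) (B' : Fin k → Set (Fin n')),
    (∀ i, IsHomBlock G (B i)) ∧ (∀ C, IsHomBlock G C → ∃ i, C = B i) ∧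
    (∀ i j : Fin k, i < j → ∀ x ∈ B i, ∀ y ∈ B j, x < y) ∧
    (∀ i, IsHomBlock G' (B' i)) ∧ (∀ C, IsHomBlock G' C → ∃ i, C = B' i) ∧
    (∀ i j : Fin k, i < j → ∀ x ∈ B' i, ∀ y ∈ B' j, x < y) ∧
    (∀ i j : Fin k, (∀ u ∈ B i, ∀ v ∈ B j, u ≠ v → G.Adj u v) ↔
            (∀ u ∈ B' i, ∀ v ∈ B' j, u ≠ v → G'.Adj u v)) ∧
    (∀ i, (B i).ncard = 1 ↔ (B' i).ncard = 1)

/-- The shadow within types `∂_τ G`. -/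
def typeShadow {n : ℕ} (G : SimpleGraph (Fin n)) : Set (SimpleGraph (Fin (n - 1))) :=
  {H ∈ shadow G | SameType H G}

/-- The shadow within types `∂_τ 𝒢` of a collection. -/
def typeShadowCol {n : ℕ} (𝒢 : Set (SimpleGraph (Fin n))) : Set (SimpleGraph (Fin (n - 1))) :=
  ⋃ G ∈ 𝒢, typeShadow G

/-- `Z^d(n) = {x ∈ ℤ^d : x_i ≥ 0, Σ_i x_i = n}`. -/
def Zdn (d n : ℕ) : Set (Fin d → ℤ) := {x | (∀ i, 0 ≤ x i) ∧ ∑ i, x i = (n : ℤ)}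

/-- A line in `Z^d(n)`, determined by two coordinates `j, k`. -/
def ZLine (d n : ℕ) (j k : Fin d) : Set (Fin d → ℤ) :=
  {x ∈ Zdn d n | ∀ i, i ≠ j → i ≠ k → x i = 0}

/-- The shadow of a subset `A ⊆ Z^d(n)`. -/
def Zshadow (d n : ℕ) (A : Set (Fin d → ℤ)) : Set (Fin d → ℤ) :=
  {x ∈ Zdn d (n - 1) | ∃ y ∈ A, ∀ i, x i ≤ y i}

/-- `phiAt G d x` : `x ∈ ℤ^d` is the image `φ(G)` of `G`, i.e. the homogeneous blocks of `G`
of size at least `2`, in increasing order, are `B_1 < ⋯ < B_d` and `x i = |B_i| − 2`. -/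
def phiAt {n : ℕ} (G : SimpleGraph (Fin n)) (d : ℕ) (x : Fin d → ℤ) : Prop :=
  ∃ B : Fin d → Set (Fin n),
    (∀ i, IsHomBlock G (B i) ∧ 2 ≤ (B i).ncard) ∧
    (∀ C, IsHomBlock G C → 2 ≤ C.ncard → ∃ i, C = B i) ∧
    (∀ i j : Fin d, i < j → ∀ u ∈ B i, ∀ v ∈ B j, u < v) ∧
    (∀ i, x i = ((B i).ncard : ℤ) - 2)

/-- `𝒢₀` (a set of ordered graphs of a common type, of common excess `m`) contains a line:
some subset `S ⊆ 𝒢₀` has `φ(S)` equal to a line in `Z^d(m)`. -/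
def ContainsLine {n : ℕ} (𝒢₀ : Set (SimpleGraph (Fin n))) (m : ℕ) : Prop :=
  ∃ S ⊆ 𝒢₀, ∃ (d : ℕ) (j k : Fin d),
    {x : Fin d → ℤ | ∃ G ∈ S, phiAt G d x} = ZLine d m j k

/-- `eraseSet G X` is `G − X`: delete all vertices of `X` and relabel order-preservingly. -/
noncomputable def eraseSet {n : ℕ} (G : SimpleGraph (Fin n)) (X : Finset (Fin n)) :
    SimpleGraph (Fin (n - X.card)) where
  Adj i j := G.Adj ((Xᶜ.orderIsoOfFin (by rw [Finset.card_compl, Fintype.card_fin]) i) : Fin n)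
                   ((Xᶜ.orderIsoOfFin (by rw [Finset.card_compl, Fintype.card_fin]) j) : Fin n)
  symm := ⟨fun i j h => G.adj_symm h⟩
  loopless := ⟨fun i h => G.irrefl h⟩

/-- A semi-homogeneous block: a set `B` of consecutive vertices such that all vertices of `B`
have the same neighbourhood outside `B`, and, for some `L ⊆ ℕ`, two vertices `x, y ∈ B` are
adjacent iff `|x − y| ∈ L`. -/
def IsSemiHomBlock {n : ℕ} (G : SimpleGraph (Fin n)) (B : Set (Fin n)) : Prop :=
  B.OrdConnected ∧
  (∀ x ∈ B, ∀ y ∈ B, G.neighborSet x \ B = G.neighborSet y \ B) ∧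
  ∃ L : Set ℕ, ∀ x ∈ B, ∀ y ∈ B, (G.Adj x y ↔ ((x : ℤ) - (y : ℤ)).natAbs ∈ L)


def NAdj {n : ℕ} (G : SimpleGraph (Fin n)) (x y : ℕ) : Prop :=
  ∃ (hx : x < n) (hy : y < n), G.Adj ⟨x, hx⟩ ⟨y, hy⟩

lemma NAdj_iff {n : ℕ} (G : SimpleGraph (Fin n)) {x y : ℕ} (hx : x < n) (hy : y < n) :
    NAdj G x y ↔ G.Adj ⟨x, hx⟩ ⟨y, hy⟩ := by
  constructor
  · rintro ⟨h1, h2, h⟩; exact h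
  · intro h; exact ⟨hx, hy, h⟩

lemma NAdj_symm {n : ℕ} (G : SimpleGraph (Fin n)) (x y : ℕ) :
    NAdj G x y ↔ NAdj G y x := by
  constructor <;> rintro ⟨h1, h2, h⟩ <;> exact ⟨h2, h1, h.symm⟩

def relN {n : ℕ} (a b : Fin n) (x u : ℕ) : Prop :=
  x < n ∧ ((x < (a:ℕ) ∧ x < (b:ℕ) ∧ u = x) ∨ ((a:ℕ) < x ∧ x ≤ (b:ℕ) ∧ u + 1 = x) ∨
    ((a:ℕ) < x ∧ (b:ℕ) < x ∧ u = x))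

lemma delMap_val {n : ℕ} (v : Fin n) (i : Fin (n-1)) :
    ((delMap v i : Fin n) : ℕ) = if (i:ℕ) < (v:ℕ) then (i:ℕ) else (i:ℕ)+1 := by
  unfold delMap; split <;> rfl

lemma relN_delMap {n : ℕ} {a b : Fin n} {x u : ℕ} (h : relN a b x u) :
    ∃ (j : Fin (n-1)) (hx : x < n) (hu : u < n),
      delMap a j = ⟨x, hx⟩ ∧ delMap b j = ⟨u, hu⟩ := by
  obtain ⟨hx, hc⟩ := h
  have ha := a.isLt; have hb := b.isLt
  rcases hc with ⟨h1, h2, h3⟩ | ⟨h1, h2, h3⟩ | ⟨h1, h2, h3⟩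
  · refine ⟨⟨x, by omega⟩, hx, by omega, ?_, ?_⟩ <;>
      (apply Fin.ext; rw [delMap_val]; simp only [Fin.val_mk]; split <;> omega)
  · refine ⟨⟨u, by omega⟩, hx, by omega, ?_, ?_⟩ <;>
      (apply Fin.ext; rw [delMap_val]; simp only [Fin.val_mk]; split <;> omega)
  · refine ⟨⟨x - 1, by omega⟩, hx, by omega, ?_, ?_⟩ <;>
      (apply Fin.ext; rw [delMap_val]; simp only [Fin.val_mk]; split <;> omega)

lemma transport {n : ℕ} {G H : SimpleGraph (Fin n)} {a b : Fin n}
    (e : erase G a = erase H b) {x y u v : ℕ}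
    (r1 : relN a b x u) (r2 : relN a b y v) : NAdj G x y ↔ NAdj H u v := by
  obtain ⟨j1, hx, hu, hj1a, hj1b⟩ := relN_delMap r1
  obtain ⟨j2, hy, hv, hj2a, hj2b⟩ := relN_delMap r2
  have h : (erase G a).Adj j1 j2 ↔ (erase H b).Adj j1 j2 := by rw [e]
  have h' : G.Adj (delMap a j1) (delMap a j2) ↔ H.Adj (delMap b j1) (delMap b j2) := h
  rw [hj1a, hj2a, hj1b, hj2b] at h'
  exact (NAdj_iff G hx hy).trans (h'.trans (NAdj_iff H hu hv).symm)

lemma comb {n : ℕ} {G H : SimpleGraph (Fin n)} (a b a' b' : Fin n)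
    (e : erase G a = erase H b) (e' : erase G a' = erase H b')
    (x y x' y' u v : ℕ)
    (r1 : relN a b x u) (r2 : relN a b y v)
    (r3 : relN a' b' x' u) (r4 : relN a' b' y' v) :
    NAdj G x y ↔ NAdj G x' y' :=
  (transport e r1 r2).trans (transport e' r3 r4).symm

/-- **Lemma (four in a row).** If `a₁ < a₂ < a₃ < a₄`, the `bᵢ` are pairwise distinct with
`a₄ ≤ bᵢ`, and `G − aᵢ = H − bᵢ` for each `i`, then the interval `[a₂, a₃]` is homogeneous
in `G` (all its vertices are pairwise `∼`-equivalent). -/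
theorem four_in_a_row (n : ℕ) (G H : SimpleGraph (Fin n)) (a₁ a₂ a₃ a₄ b₁ b₂ b₃ b₄ : Fin n)
    (ha₁ : a₁ < a₂) (ha₂ : a₂ < a₃) (ha₃ : a₃ < a₄)
    (hb : b₁ ≠ b₂ ∧ b₁ ≠ b₃ ∧ b₁ ≠ b₄ ∧ b₂ ≠ b₃ ∧ b₂ ≠ b₄ ∧ b₃ ≠ b₄)
    (hab : a₄ ≤ b₁ ∧ a₄ ≤ b₂ ∧ a₄ ≤ b₃ ∧ a₄ ≤ b₄)
    (e₁ : erase G a₁ = erase H b₁) (e₂ : erase G a₂ = erase H b₂)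
    (e₃ : erase G a₃ = erase H b₃) (e₄ : erase G a₄ = erase H b₄) :
    ∀ x ∈ Set.Icc a₂ a₃, ∀ y ∈ Set.Icc a₂ a₃, simRel G x y := by
  obtain ⟨hb12, hb13, hb14, hb23, hb24, hb34⟩ := hb
  obtain ⟨hab1, hab2, hab3, hab4⟩ := hab
  have A12 : (a₁:ℕ) < a₂ := Fin.lt_def.mp ha₁
  have A23 : (a₂:ℕ) < a₃ := Fin.lt_def.mp ha₂
  have A34 : (a₃:ℕ) < a₄ := Fin.lt_def.mp ha₃
  have B1 : (a₄:ℕ) ≤ b₁ := Fin.le_def.mp hab1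
  have B2 : (a₄:ℕ) ≤ b₂ := Fin.le_def.mp hab2
  have B3 : (a₄:ℕ) ≤ b₃ := Fin.le_def.mp hab3
  have B4 : (a₄:ℕ) ≤ b₄ := Fin.le_def.mp hab4
  have D12 : (b₁:ℕ) ≠ b₂ := fun hh => hb12 (Fin.val_injective hh)
  have D13 : (b₁:ℕ) ≠ b₃ := fun hh => hb13 (Fin.val_injective hh)
  have D14 : (b₁:ℕ) ≠ b₄ := fun hh => hb14 (Fin.val_injective hh)
  have D23 : (b₂:ℕ) ≠ b₃ := fun hh => hb23 (Fin.val_injective hh)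
  have D24 : (b₂:ℕ) ≠ b₄ := fun hh => hb24 (Fin.val_injective hh)
  have D34 : (b₃:ℕ) ≠ b₄ := fun hh => hb34 (Fin.val_injective hh)
  have hb1n : (b₁:ℕ) < n := b₁.isLt
  have hb2n : (b₂:ℕ) < n := b₂.isLt
  have hb3n : (b₃:ℕ) < n := b₃.isLt
  have hb4n : (b₄:ℕ) < n := b₄.isLt
  have ha3n : (a₃:ℕ) < n := a₃.isLt
  have ha4n : (a₄:ℕ) < n := a₄.isLt
  -- column w < a₂: consecutive rows in (a₂,a₃] agree
  have cW1 : ∀ z w : ℕ, (a₂:ℕ) < z → z ≤ (a₃:ℕ) → w < (a₂:ℕ) →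
      (NAdj G z w ↔ NAdj G (z-1) w) := by
    intro z w h1 h2 h3
    exact comb a₂ b₂ a₃ b₃ e₂ e₃ z w (z-1) w (z-1) w
      (by unfold relN; omega) (by unfold relN; omega) (by unfold relN; omega)
      (by unfold relN; omega)
  -- rows in (a₂,a₃] are constant on [a₁,a₂]
  have cRC12 : ∀ z t : ℕ, (a₂:ℕ) < z → z ≤ (a₃:ℕ) → (a₁:ℕ) ≤ t → t < (a₂:ℕ) →
      (NAdj G z t ↔ NAdj G z (t+1)) := by
    intro z t h1 h2 h3 h4
    exact comb a₂ b₂ a₁ b₁ e₂ e₁ z t z (t+1) (z-1) t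
      (by unfold relN; omega) (by unfold relN; omega) (by unfold relN; omega)
      (by unfold relN; omega)
  have rowA12 : ∀ z : ℕ, (a₂:ℕ) < z → z ≤ (a₃:ℕ) → (NAdj G z a₂ ↔ NAdj G z a₁) := by
    intro z h1 h2
    have Hd : ∀ d : ℕ, (a₁:ℕ) + d ≤ (a₂:ℕ) → (NAdj G z ((a₁:ℕ) + d) ↔ NAdj G z a₁) := by
      intro d
      induction d with
      | zero => intro _; simp
      | succ d ih =>
        intro hd
        have h5 := cRC12 z ((a₁:ℕ) + d) h1 h2 (by omega) (by omega)
        rw [show (a₁:ℕ) + d + 1 = (a₁:ℕ) + (d+1) by omega] at h5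
        exact h5.symm.trans (ih (by omega))
    have h := Hd ((a₂:ℕ) - (a₁:ℕ)) (by omega)
    rw [show (a₁:ℕ) + ((a₂:ℕ) - (a₁:ℕ)) = (a₂:ℕ) by omega] at h
    exact h
  have colA1 : ∀ z : ℕ, (a₂:ℕ) ≤ z → z ≤ (a₃:ℕ) → (NAdj G z a₁ ↔ NAdj G a₂ a₁) := by
    intro z h1 h2
    have Hd : ∀ d : ℕ, (a₂:ℕ) + d ≤ (a₃:ℕ) → (NAdj G ((a₂:ℕ) + d) a₁ ↔ NAdj G a₂ a₁) := by
      intro d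
      induction d with
      | zero => intro _; simp
      | succ d ih =>
        intro hd
        have h5 := cW1 ((a₂:ℕ) + (d+1)) a₁ (by omega) (by omega) (by omega)
        rw [show (a₂:ℕ) + (d+1) - 1 = (a₂:ℕ) + d by omega] at h5
        exact h5.trans (ih (by omega))
    have h := Hd (z - (a₂:ℕ)) (by omega)
    rw [show (a₂:ℕ) + (z - (a₂:ℕ)) = z by omega] at h
    exact h
  have colA2 : ∀ z z' : ℕ, (a₂:ℕ) < z → z ≤ (a₃:ℕ) → (a₂:ℕ) < z' → z' ≤ (a₃:ℕ) →
      (NAdj G z a₂ ↔ NAdj G z' a₂) := by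
    intro z z' h1 h2 h3 h4
    calc NAdj G z a₂ ↔ NAdj G z a₁ := rowA12 z h1 h2
      _ ↔ NAdj G a₂ a₁ := colA1 z (by omega) h2
      _ ↔ NAdj G z' a₁ := (colA1 z' (by omega) h4).symm
      _ ↔ NAdj G z' a₂ := (rowA12 z' h3 h4).symm
  have cDI : ∀ z v : ℕ, (a₂:ℕ) < z → z ≤ (a₃:ℕ) → (a₂:ℕ) < v → v ≤ (a₃:ℕ) →
      (NAdj G z v ↔ NAdj G (z-1) (v-1)) := by
    intro z v h1 h2 h3 h4
    exact comb a₂ b₂ a₃ b₃ e₂ e₃ z v (z-1) (v-1) (z-1) (v-1)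
      (by unfold relN; omega) (by unfold relN; omega) (by unfold relN; omega)
      (by unfold relN; omega)
  have cDIk : ∀ k z v : ℕ, (a₂:ℕ) + k ≤ z → z ≤ (a₃:ℕ) → (a₂:ℕ) + k ≤ v → v ≤ (a₃:ℕ) →
      (NAdj G z v ↔ NAdj G (z-k) (v-k)) := by
    intro k
    induction k with
    | zero => intro z v _ _ _ _; simp
    | succ k ih =>
      intro z v h1 h2 h3 h4
      have h5 := ih z v (by omega) h2 (by omega) h4
      have h6 := cDI (z-k) (v-k) (by omega) (by omega) (by omega) (by omega)
      rw [show z - k - 1 = z - (k+1) by omega, show v - k - 1 = v - (k+1) by omega] at h6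
      exact h5.trans h6
  -- internal columns
  have cW3 : ∀ x w : ℕ, (a₂:ℕ) < x → x ≤ (a₃:ℕ) → (a₂:ℕ) ≤ w → w ≤ (a₃:ℕ) →
      w ≠ x → w + 1 ≠ x → (NAdj G x w ↔ NAdj G (x-1) w) := by
    intro x w hx1 hx2 hw1 hw2 hne1 hne2
    rcases eq_or_lt_of_le hw1 with heq | hlt
    · -- w = a₂, so x ≥ a₂ + 2
      rw [show w = (a₂:ℕ) from heq.symm]
      calc NAdj G x (a₂:ℕ) ↔ NAdj G x a₁ := rowA12 x hx1 hx2
        _ ↔ NAdj G (x-1) a₁ := cW1 x a₁ hx1 hx2 A12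
        _ ↔ NAdj G (x-1) a₂ := (rowA12 (x-1) (by omega) (by omega)).symm
    · rcases lt_or_gt_of_ne hne1 with hwx | hwx
      · -- a₂ < w < x - 1
        have h1 := cDIk (w - (a₂:ℕ)) x w (by omega) hx2 (by omega) hw2
        rw [show w - (w - (a₂:ℕ)) = (a₂:ℕ) by omega] at h1
        have h2 := cDIk (w - (a₂:ℕ)) (x-1) w (by omega) (by omega) (by omega) hw2
        rw [show w - (w - (a₂:ℕ)) = (a₂:ℕ) by omega] at h2
        have h3 := colA2 (x - (w - (a₂:ℕ))) (x - 1 - (w - (a₂:ℕ))) (by omega) (by omega)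
          (by omega) (by omega)
        rw [show x - 1 - (w - (a₂:ℕ)) = x - (w - (a₂:ℕ)) - 1 by omega] at h3
        rw [show x - (w - (a₂:ℕ)) - 1 = x - 1 - (w - (a₂:ℕ)) by omega] at h3
        exact h1.trans (h3.trans h2.symm)
      · -- w > x
        have h1 := cDIk (x - (a₂:ℕ)) x w (by omega) hx2 (by omega) hw2
        rw [show x - (x - (a₂:ℕ)) = (a₂:ℕ) by omega] at h1
        have h2 := cDIk (x - 1 - (a₂:ℕ)) (x-1) w (by omega) (by omega) (by omega) hw2
        rw [show x - 1 - (x - 1 - (a₂:ℕ)) = (a₂:ℕ) by omega] at h2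
        have key : NAdj G a₂ (w - (x - (a₂:ℕ))) ↔ NAdj G a₂ (w - (x - 1 - (a₂:ℕ))) := by
          have hs1 := NAdj_symm G (a₂:ℕ) (w - (x - (a₂:ℕ)))
          have hs2 := NAdj_symm G (a₂:ℕ) (w - (x - 1 - (a₂:ℕ)))
          have h3 := colA2 (w - (x - (a₂:ℕ))) (w - (x - 1 - (a₂:ℕ))) (by omega) (by omega)
            (by omega) (by omega)
          exact hs1.trans (h3.trans hs2.symm)
        exact h1.trans (key.trans h2.symm)
    -- bad pattern case A : b₁,b₂ < w ≤ b₃,b₄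
  have W4B : ∀ (aL bL aM bM aK bK : Fin n),
      erase G aL = erase H bL → erase G aM = erase H bM → erase G aK = erase H bK →
      ∀ Mv mv : ℕ,
      (aL:ℕ) ≤ (a₂:ℕ) → (a₄:ℕ) ≤ (bL:ℕ) → (bL:ℕ) < Mv →
      (aM:ℕ) ≤ (a₂:ℕ) → (bM:ℕ) = Mv →
      (a₃:ℕ) ≤ (aK:ℕ) → (aK:ℕ) ≤ (a₄:ℕ) → (a₄:ℕ) ≤ (bK:ℕ) → mv < (bK:ℕ) →
      mv ≤ (b₃:ℕ) → mv ≤ (b₄:ℕ) → (a₄:ℕ) < Mv → Mv < mv →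
      ∀ x w : ℕ, (a₂:ℕ) < x → x ≤ (a₃:ℕ) → Mv < w → w ≤ mv →
      (NAdj G x w ↔ NAdj G (x-1) w) := by
    intro aL bL aM bM aK bK eL eM eK Mv mv hL1 hL2 hL3 hM1 hM2 hK1 hK2 hK3 hK4 hm3 hm4 hMa hMm
    intro x w hx1 hx2 hw1 hw2
    have hMn : Mv < n := hM2 ▸ bM.isLt
    have hmn : mv < n := by omega
    have rowM : ∀ t : ℕ, (a₂:ℕ) ≤ t → t < (a₄:ℕ) → (NAdj G Mv t ↔ NAdj G Mv (t+1)) := by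
      intro t h1 h2
      exact comb a₄ b₄ aM bM e₄ eM Mv t Mv (t+1) (Mv-1) t
        (by unfold relN; omega) (by unfold relN; omega) (by unfold relN; omega)
        (by unfold relN; omega)
    have RW34 : ∀ w' t : ℕ, Mv < w' → w' ≤ mv → (a₃:ℕ) ≤ t → t < (a₄:ℕ) →
        (NAdj G w' t ↔ NAdj G w' (t+1)) := by
      intro w' t h1 h2 h3 h4
      exact comb a₄ b₄ a₃ b₃ e₄ e₃ w' t w' (t+1) (w'-1) t
        (by unfold relN; omega) (by unfold relN; omega) (by unfold relN; omega)
        (by unfold relN; omega)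
    have R4 : ∀ w' : ℕ, Mv ≤ w' → w' < mv → (NAdj G a₄ w' ↔ NAdj G a₄ (w'+1)) := by
      intro w' h1 h2
      exact comb aL bL a₃ b₃ eL e₃ (a₄:ℕ) w' (a₄:ℕ) (w'+1) ((a₄:ℕ)-1) w'
        (by unfold relN; omega) (by unfold relN; omega) (by unfold relN; omega)
        (by unfold relN; omega)
    have Dn : ∀ z v : ℕ, (a₂:ℕ) < z → z ≤ (a₃:ℕ) → Mv ≤ v → v ≤ mv →
        (NAdj G z v ↔ NAdj G (z-1) (v+1)) := by
      intro z v h1 h2 h3 h4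
      exact comb aL bL aK bK eL eK z v (z-1) (v+1) (z-1) v
        (by unfold relN; omega) (by unfold relN; omega) (by unfold relN; omega)
        (by unfold relN; omega)
    have chain34 : ∀ w' : ℕ, Mv < w' → w' ≤ mv → (NAdj G w' a₃ ↔ NAdj G w' a₄) := by
      intro w' h1 h2
      have Hd : ∀ d : ℕ, (a₃:ℕ) + d ≤ (a₄:ℕ) → (NAdj G w' ((a₃:ℕ)+d) ↔ NAdj G w' a₃) := by
        intro d
        induction d with
        | zero => intro _; simp
        | succ d ih =>
          intro hd
          have h5 := RW34 w' ((a₃:ℕ)+d) h1 h2 (by omega) (by omega)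
          rw [show (a₃:ℕ) + d + 1 = (a₃:ℕ)+(d+1) by omega] at h5
          exact h5.symm.trans (ih (by omega))
      have h := Hd ((a₄:ℕ) - (a₃:ℕ)) (by omega)
      rw [show (a₃:ℕ) + ((a₄:ℕ) - (a₃:ℕ)) = (a₄:ℕ) by omega] at h
      exact h.symm
    have CHM : NAdj G Mv a₃ ↔ NAdj G Mv a₄ := by
      have Hd : ∀ d : ℕ, (a₃:ℕ) + d ≤ (a₄:ℕ) → (NAdj G Mv ((a₃:ℕ)+d) ↔ NAdj G Mv a₃) := by
        intro d
        induction d with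
        | zero => intro _; simp
        | succ d ih =>
          intro hd
          have h5 := rowM ((a₃:ℕ)+d) (by omega) (by omega)
          rw [show (a₃:ℕ) + d + 1 = (a₃:ℕ)+(d+1) by omega] at h5
          exact h5.symm.trans (ih (by omega))
      have h := Hd ((a₄:ℕ) - (a₃:ℕ)) (by omega)
      rw [show (a₃:ℕ) + ((a₄:ℕ) - (a₃:ℕ)) = (a₄:ℕ) by omega] at h
      exact h.symm
    have CH4 : ∀ v : ℕ, Mv ≤ v → v ≤ mv → (NAdj G a₄ v ↔ NAdj G a₄ Mv) := by
      intro v h1 h2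
      have Hd : ∀ d : ℕ, Mv + d ≤ mv → (NAdj G a₄ (Mv+d) ↔ NAdj G a₄ Mv) := by
        intro d
        induction d with
        | zero => intro _; simp
        | succ d ih =>
          intro hd
          have h5 := R4 (Mv+d) (by omega) (by omega)
          rw [show Mv + d + 1 = Mv+(d+1) by omega] at h5
          exact h5.symm.trans (ih (by omega))
      have h := Hd (v - Mv) (by omega)
      rw [show Mv + (v - Mv) = v by omega] at h
      exact h
    have row3 : ∀ v : ℕ, Mv ≤ v → v ≤ mv → (NAdj G a₃ v ↔ NAdj G a₃ Mv) := by
      intro v h1 h2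
      rcases eq_or_lt_of_le h1 with heq | hlt
      · rw [← heq]
      · calc NAdj G (a₃:ℕ) v ↔ NAdj G v a₃ := NAdj_symm G _ _
          _ ↔ NAdj G v a₄ := chain34 v hlt h2
          _ ↔ NAdj G (a₄:ℕ) v := NAdj_symm G _ _
          _ ↔ NAdj G (a₄:ℕ) Mv := CH4 v h1 h2
          _ ↔ NAdj G Mv a₄ := NAdj_symm G _ _
          _ ↔ NAdj G Mv a₃ := CHM.symm
          _ ↔ NAdj G (a₃:ℕ) Mv := NAdj_symm G _ _
    have CA : ∀ k z v : ℕ, (a₃:ℕ) = z + k → (a₂:ℕ) ≤ z → Mv ≤ v → v ≤ mv →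
        (NAdj G z v ↔ NAdj G a₃ Mv) := by
      intro k
      induction k with
      | zero =>
        intro z v hz _ h1 h2
        rw [show z = (a₃:ℕ) by omega]
        exact row3 v h1 h2
      | succ k ih =>
        intro z v hz hza h1 h2
        rcases eq_or_lt_of_le h1 with heq | hlt
        · rw [← heq]
          calc NAdj G z Mv ↔ NAdj G Mv z := NAdj_symm G _ _
            _ ↔ NAdj G Mv (z+1) := rowM z hza (by omega)
            _ ↔ NAdj G (z+1) Mv := NAdj_symm G _ _
            _ ↔ NAdj G (a₃:ℕ) Mv := ih (z+1) Mv (by omega) (by omega) (by omega) (by omega)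
        · have h6 := Dn (z+1) (v-1) (by omega) (by omega) (by omega) (by omega)
          rw [show z + 1 - 1 = z by omega, show v - 1 + 1 = v by omega] at h6
          exact h6.symm.trans (ih (z+1) (v-1) (by omega) (by omega) (by omega) (by omega))
    have hxA := CA ((a₃:ℕ) - x) x w (by omega) (by omega) (by omega) (by omega)
    have hxB := CA ((a₃:ℕ) - x + 1) (x-1) w (by omega) (by omega) (by omega) (by omega)
    exact hxA.trans hxB.symm
  -- bad pattern case A' : b₃,b₄ < w ≤ b₁,b₂
  have W4C : ∀ (aL bL aM bM : Fin n),
      erase G aL = erase H bL → erase G aM = erase H bM →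
      ∀ Mv mv : ℕ,
      (aL:ℕ) ≤ (a₂:ℕ) → (bL:ℕ) = mv →
      (aM:ℕ) ≤ (a₂:ℕ) → (a₄:ℕ) ≤ (bM:ℕ) → mv < (bM:ℕ) →
      (b₃:ℕ) ≤ Mv → (b₄:ℕ) ≤ Mv → (a₄:ℕ) < Mv → Mv < mv → mv ≤ (b₁:ℕ) →
      ∀ x w : ℕ, (a₂:ℕ) < x → x ≤ (a₃:ℕ) → Mv < w → w ≤ mv →
      (NAdj G x w ↔ NAdj G (x-1) w) := by
    intro aL bL aM bM eL eM Mv mv hL1 hL2 hM1 hM2 hM3 h3M h4M hMa hMm hmb1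
    intro x w hx1 hx2 hw1 hw2
    have hmn : mv < n := hL2 ▸ bL.isLt
    have hm1n : mv + 1 < n := by have := bM.isLt; omega
    have RW34' : ∀ w' t : ℕ, Mv < w' → w' ≤ mv → (a₃:ℕ) ≤ t → t < (a₄:ℕ) →
        (NAdj G w' t ↔ NAdj G w' (t+1)) := by
      intro w' t h1 h2 h3 h4
      exact comb a₄ b₄ a₃ b₃ e₄ e₃ w' t w' (t+1) w' t
        (by unfold relN; omega) (by unfold relN; omega) (by unfold relN; omega)
        (by unfold relN; omega)
    have R4' : ∀ w' : ℕ, Mv + 1 < w' → w' ≤ mv → (NAdj G a₄ w' ↔ NAdj G a₄ (w'-1)) := by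
      intro w' h1 h2
      exact comb a₁ b₁ a₃ b₃ e₁ e₃ (a₄:ℕ) w' (a₄:ℕ) (w'-1) ((a₄:ℕ)-1) (w'-1)
        (by unfold relN; omega) (by unfold relN; omega) (by unfold relN; omega)
        (by unfold relN; omega)
    have VR' : ∀ z : ℕ, (a₂:ℕ) ≤ z → z ≤ (a₃:ℕ) →
        (NAdj G z (mv+1) ↔ NAdj G (z+1) (mv+1)) := by
      intro z h1 h2
      exact comb a₄ b₄ aL bL e₄ eL z (mv+1) (z+1) (mv+1) z (mv+1)
        (by unfold relN; omega) (by unfold relN; omega) (by unfold relN; omega)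
        (by unfold relN; omega)
    have AD : ∀ z v : ℕ, (a₂:ℕ) ≤ z → z ≤ (a₃:ℕ) → Mv < v → v ≤ mv →
        (NAdj G z v ↔ NAdj G (z+1) (v+1)) := by
      intro z v h1 h2 h3 h4
      exact comb a₄ b₄ aM bM e₄ eM z v (z+1) (v+1) z v
        (by unfold relN; omega) (by unfold relN; omega) (by unfold relN; omega)
        (by unfold relN; omega)
    have chain34' : ∀ w' : ℕ, Mv < w' → w' ≤ mv → (NAdj G w' a₃ ↔ NAdj G w' a₄) := by
      intro w' h1 h2
      have Hd : ∀ d : ℕ, (a₃:ℕ) + d ≤ (a₄:ℕ) → (NAdj G w' ((a₃:ℕ)+d) ↔ NAdj G w' a₃) := by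
        intro d
        induction d with
        | zero => intro _; simp
        | succ d ih =>
          intro hd
          have h5 := RW34' w' ((a₃:ℕ)+d) h1 h2 (by omega) (by omega)
          rw [show (a₃:ℕ) + d + 1 = (a₃:ℕ)+(d+1) by omega] at h5
          exact h5.symm.trans (ih (by omega))
      have h := Hd ((a₄:ℕ) - (a₃:ℕ)) (by omega)
      rw [show (a₃:ℕ) + ((a₄:ℕ) - (a₃:ℕ)) = (a₄:ℕ) by omega] at h
      exact h.symm
    have CH4' : ∀ v : ℕ, Mv < v → v ≤ mv → (NAdj G a₄ v ↔ NAdj G a₄ mv) := by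
      intro v h1 h2
      have Hd : ∀ d v' : ℕ, v' + d = mv → Mv < v' → (NAdj G a₄ v' ↔ NAdj G a₄ mv) := by
        intro d
        induction d with
        | zero => intro v' hv _; rw [show v' = mv by omega]
        | succ d ih =>
          intro v' hv h1'
          have h5 := R4' (v'+1) (by omega) (by omega)
          rw [show v' + 1 - 1 = v' by omega] at h5
          exact h5.symm.trans (ih (v'+1) (by omega) (by omega))
      exact Hd (mv - v) v (by omega) h1
    have row3' : ∀ v : ℕ, Mv < v → v ≤ mv → (NAdj G a₃ v ↔ NAdj G a₃ mv) := by
      intro v h1 h2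
      calc NAdj G (a₃:ℕ) v ↔ NAdj G v a₃ := NAdj_symm G _ _
        _ ↔ NAdj G v a₄ := chain34' v h1 h2
        _ ↔ NAdj G (a₄:ℕ) v := NAdj_symm G _ _
        _ ↔ NAdj G (a₄:ℕ) mv := CH4' v h1 h2
        _ ↔ NAdj G mv a₄ := NAdj_symm G _ _
        _ ↔ NAdj G mv a₃ := (chain34' mv hMm (le_refl _)).symm
        _ ↔ NAdj G (a₃:ℕ) mv := NAdj_symm G _ _
    have CHV : ∀ z : ℕ, (a₂:ℕ) ≤ z → z ≤ (a₃:ℕ) + 1 →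
        (NAdj G z (mv+1) ↔ NAdj G a₂ (mv+1)) := by
      intro z h1 h2
      have Hd : ∀ d : ℕ, (a₂:ℕ) + d ≤ (a₃:ℕ)+1 →
          (NAdj G ((a₂:ℕ)+d) (mv+1) ↔ NAdj G a₂ (mv+1)) := by
        intro d
        induction d with
        | zero => intro _; simp
        | succ d ih =>
          intro hd
          have h5 := VR' ((a₂:ℕ)+d) (by omega) (by omega)
          rw [show (a₂:ℕ) + d + 1 = (a₂:ℕ)+(d+1) by omega] at h5
          exact h5.symm.trans (ih (by omega))
      have h := Hd (z - (a₂:ℕ)) (by omega)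
      rw [show (a₂:ℕ) + (z - (a₂:ℕ)) = z by omega] at h
      exact h
    have anchor : NAdj G a₃ mv ↔ NAdj G a₂ (mv+1) := by
      have h5 := AD (a₃:ℕ) mv (by omega) (le_refl _) hMm (le_refl _)
      exact h5.trans (CHV ((a₃:ℕ)+1) (by omega) (by omega))
    have CA' : ∀ k z v : ℕ, (a₃:ℕ) = z + k → (a₂:ℕ) ≤ z → Mv < v → v ≤ mv →
        (NAdj G z v ↔ NAdj G a₃ mv) := by
      intro k
      induction k with
      | zero =>
        intro z v hz _ h1 h2
        rw [show z = (a₃:ℕ) by omega]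
        exact row3' v h1 h2
      | succ k ih =>
        intro z v hz hza h1 h2
        rcases eq_or_lt_of_le h2 with heq | hlt
        · subst heq
          have h5 := AD z v hza (by omega) h1 (le_refl _)
          have h6 := CHV (z+1) (by omega) (by omega)
          exact h5.trans (h6.trans anchor.symm)
        · have h5 := AD z v hza (by omega) h1 h2
          exact h5.trans (ih (z+1) (v+1) (by omega) (by omega) (by omega) (by omega))
    have hxA := CA' ((a₃:ℕ) - x) x w (by omega) (by omega) hw1 hw2
    have hxB := CA' ((a₃:ℕ) - x + 1) (x-1) w (by omega) (by omega) hw1 hw2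
    exact hxA.trans hxB.symm
  -- consecutive rows agree everywhere
  have CONS : ∀ x w : ℕ, (a₂:ℕ) < x → x ≤ (a₃:ℕ) → w < n → w ≠ x → w + 1 ≠ x →
      (NAdj G x w ↔ NAdj G (x-1) w) := by
    intro x w hx1 hx2 hwn hne1 hne2
    rcases lt_or_ge w (a₂:ℕ) with hw | hw
    · exact cW1 x w hx1 hx2 hw
    rcases le_or_gt w (a₃:ℕ) with hw3 | hw3
    · exact cW3 x w hx1 hx2 hw hw3 hne1 hne2
    rcases le_or_gt w (a₄:ℕ) with hw4 | hw4
    · exact comb a₁ b₁ a₃ b₃ e₁ e₃ x w (x-1) w (x-1) (w-1)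
        (by unfold relN; omega) (by unfold relN; omega) (by unfold relN; omega)
        (by unfold relN; omega)
    by_cases s1 : w ≤ (b₁:ℕ)
    · by_cases s3 : w ≤ (b₃:ℕ)
      · exact comb a₁ b₁ a₃ b₃ e₁ e₃ x w (x-1) w (x-1) (w-1)
          (by unfold relN; omega) (by unfold relN; omega) (by unfold relN; omega)
          (by unfold relN; omega)
      · by_cases s4 : w ≤ (b₄:ℕ)
        · exact comb a₁ b₁ a₄ b₄ e₁ e₄ x w (x-1) w (x-1) (w-1)
            (by unfold relN; omega) (by unfold relN; omega) (by unfold relN; omega)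
            (by unfold relN; omega)
        · by_cases s2 : w ≤ (b₂:ℕ)
          · -- bad2 : b₃,b₄ < w ≤ b₁,b₂
            rcases lt_or_gt_of_ne D12 with h12 | h12
            · rcases lt_or_gt_of_ne D34 with h34 | h34
              · exact W4C a₁ b₁ a₂ b₂ e₁ e₂ (b₄:ℕ) (b₁:ℕ) (by omega) rfl (by omega)
                  (by omega) (by omega) (by omega) (by omega) (by omega) (by omega)
                  (by omega) x w hx1 hx2 (by omega) (by omega)
              · exact W4C a₁ b₁ a₂ b₂ e₁ e₂ (b₃:ℕ) (b₁:ℕ) (by omega) rfl (by omega)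
                  (by omega) (by omega) (by omega) (by omega) (by omega) (by omega)
                  (by omega) x w hx1 hx2 (by omega) (by omega)
            · rcases lt_or_gt_of_ne D34 with h34 | h34
              · exact W4C a₂ b₂ a₁ b₁ e₂ e₁ (b₄:ℕ) (b₂:ℕ) (by omega) rfl (by omega)
                  (by omega) (by omega) (by omega) (by omega) (by omega) (by omega)
                  (by omega) x w hx1 hx2 (by omega) (by omega)
              · exact W4C a₂ b₂ a₁ b₁ e₂ e₁ (b₃:ℕ) (b₂:ℕ) (by omega) rfl (by omega)
                  (by omega) (by omega) (by omega) (by omega) (by omega) (by omega)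
                  (by omega) x w hx1 hx2 (by omega) (by omega)
          · exact comb a₂ b₂ a₃ b₃ e₂ e₃ x w (x-1) w (x-1) w
              (by unfold relN; omega) (by unfold relN; omega) (by unfold relN; omega)
              (by unfold relN; omega)
    · by_cases s3 : w ≤ (b₃:ℕ)
      · by_cases s2 : w ≤ (b₂:ℕ)
        · exact comb a₂ b₂ a₃ b₃ e₂ e₃ x w (x-1) w (x-1) (w-1)
            (by unfold relN; omega) (by unfold relN; omega) (by unfold relN; omega)
            (by unfold relN; omega)
        · by_cases s4 : w ≤ (b₄:ℕ)
          · -- bad1 : b₁,b₂ < w ≤ b₃,b₄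
            rcases lt_or_gt_of_ne D12 with h12 | h12
            · rcases lt_or_gt_of_ne D34 with h34 | h34
              · exact W4B a₁ b₁ a₂ b₂ a₄ b₄ e₁ e₂ e₄ (b₂:ℕ) (b₃:ℕ) (by omega) (by omega)
                  (by omega) (by omega) rfl (by omega) (by omega) (by omega) (by omega)
                  (by omega) (by omega) (by omega) (by omega) x w hx1 hx2 (by omega) (by omega)
              · exact W4B a₁ b₁ a₂ b₂ a₃ b₃ e₁ e₂ e₃ (b₂:ℕ) (b₄:ℕ) (by omega) (by omega)
                  (by omega) (by omega) rfl (by omega) (by omega) (by omega) (by omega)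
                  (by omega) (by omega) (by omega) (by omega) x w hx1 hx2 (by omega) (by omega)
            · rcases lt_or_gt_of_ne D34 with h34 | h34
              · exact W4B a₂ b₂ a₁ b₁ a₄ b₄ e₂ e₁ e₄ (b₁:ℕ) (b₃:ℕ) (by omega) (by omega)
                  (by omega) (by omega) rfl (by omega) (by omega) (by omega) (by omega)
                  (by omega) (by omega) (by omega) (by omega) x w hx1 hx2 (by omega) (by omega)
              · exact W4B a₂ b₂ a₁ b₁ a₃ b₃ e₂ e₁ e₃ (b₁:ℕ) (b₄:ℕ) (by omega) (by omega)
                  (by omega) (by omega) rfl (by omega) (by omega) (by omega) (by omega)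
                  (by omega) (by omega) (by omega) (by omega) x w hx1 hx2 (by omega) (by omega)
          · exact comb a₁ b₁ a₄ b₄ e₁ e₄ x w (x-1) w (x-1) w
              (by unfold relN; omega) (by unfold relN; omega) (by unfold relN; omega)
              (by unfold relN; omega)
      · exact comb a₁ b₁ a₃ b₃ e₁ e₃ x w (x-1) w (x-1) w
          (by unfold relN; omega) (by unfold relN; omega) (by unfold relN; omega)
          (by unfold relN; omega)
  -- chain consecutive similarity
  have CHAIN : ∀ d u : ℕ, (a₂:ℕ) ≤ u → u + d ≤ (a₃:ℕ) →
      ∀ w : ℕ, w < n → w ≠ u → w ≠ u + d → (NAdj G u w ↔ NAdj G (u+d) w) := by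
    intro d
    induction d with
    | zero => intro u _ _ w _ _ _; rw [Nat.add_zero]
    | succ d ih =>
      intro u h1 h2 w hwn hw1 hw2
      show NAdj G u w ↔ NAdj G (u+d+1) w
      by_cases hmid : w = u + d
      · have hd1 : 1 ≤ d := by omega
        have step := CONS (u+d+1) u (by omega) (by omega) (by omega) (by omega) (by omega)
        rw [show u + d + 1 - 1 = u + d by omega] at step
        have ihh := ih u h1 (by omega) (u+d+1) (by omega) (by omega) (by omega)
        calc NAdj G u w ↔ NAdj G w u := NAdj_symm G _ _
          _ ↔ NAdj G (u+d) u := by rw [hmid]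
          _ ↔ NAdj G (u+d+1) u := step.symm
          _ ↔ NAdj G u (u+d+1) := NAdj_symm G _ _
          _ ↔ NAdj G (u+d) (u+d+1) := ihh
          _ ↔ NAdj G (u+d+1) (u+d) := NAdj_symm G _ _
          _ ↔ NAdj G (u+d+1) w := by rw [hmid]
      · have ihh := ih u h1 (by omega) w hwn hw1 hmid
        have step := CONS (u+d+1) w (by omega) (by omega) hwn (by omega) (by omega)
        rw [show u + d + 1 - 1 = u + d by omega] at step
        exact ihh.trans step.symm
  have KEY : ∀ u v : ℕ, (a₂:ℕ) ≤ u → u ≤ (a₃:ℕ) → (a₂:ℕ) ≤ v → v ≤ (a₃:ℕ) →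
      ∀ w : ℕ, w < n → w ≠ u → w ≠ v → (NAdj G u w ↔ NAdj G v w) := by
    intro u v h1 h2 h3 h4 w hwn hw1 hw2
    rcases le_or_gt u v with huv | huv
    · have h := CHAIN (v - u) u h1 (by omega) w hwn hw1 (by omega)
      rw [show u + (v - u) = v by omega] at h
      exact h
    · have h := CHAIN (u - v) v h3 (by omega) w hwn hw2 (by omega)
      rw [show v + (u - v) = u by omega] at h
      exact h.symm
  intro x hx y hy
  have hx1 : (a₂:ℕ) ≤ (x:ℕ) := Fin.le_def.mp hx.1
  have hx2 : (x:ℕ) ≤ (a₃:ℕ) := Fin.le_def.mp hx.2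
  have hy1 : (a₂:ℕ) ≤ (y:ℕ) := Fin.le_def.mp hy.1
  have hy2 : (y:ℕ) ≤ (a₃:ℕ) := Fin.le_def.mp hy.2
  have KEYF : ∀ w : Fin n, w ≠ x → w ≠ y → (G.Adj x w ↔ G.Adj y w) := by
    intro w hw1 hw2
    have h := KEY (x:ℕ) (y:ℕ) hx1 hx2 hy1 hy2 (w:ℕ) w.isLt
      (fun hh => hw1 (Fin.val_injective hh)) (fun hh => hw2 (Fin.val_injective hh))
    have h' := ((NAdj_iff G x.isLt w.isLt).symm.trans h).trans (NAdj_iff G y.isLt w.isLt)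
    simpa using h'
  unfold simRel
  ext w
  simp only [Set.mem_diff, SimpleGraph.mem_neighborSet, Set.mem_singleton_iff]
  constructor
  · rintro ⟨hadj, hwy⟩
    by_cases hwx : w = x
    · exact absurd (hwx ▸ hadj) G.irrefl
    · exact ⟨(KEYF w hwx hwy).mp hadj, hwx⟩
  · rintro ⟨hadj, hwx⟩
    by_cases hwy : w = y
    · exact absurd (hwy ▸ hadj) G.irrefl
    · exact ⟨(KEYF w hwx hwy).mpr hadj, hwy⟩

end OrderedGraphs
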